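/- An S4^C_I-algebra is embeddable into a complete S4^C_I-algebra if and only if it is standard. -/

import Mathlib

/-- An `S4CStruct` packages the box operators and the common-knowledge operator. -/
structure S4CStruct (I : Type*) (A : Type*) [Fintype I] [BooleanAlgebra A] where
  box : I → A → A
  C : A → A

namespace S4CStruct

variable {I A : Type*} [Fintype I] [BooleanAlgebra A]

/-- `E a = ⋀ i, □_i a`. -/
def E (S : S4CStruct I A) (a : A) : A := Finset.univ.inf fun i => S.box i a

/-- The axioms of an `S4^C_I`-algebra. -/
structure IsS4C (S : S4CStruct I A) : Prop where
  box_top : ∀ i, S.box i ⊤ = ⊤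
  box_inf : ∀ i a b, S.box i (a ⊓ b) = S.box i a ⊓ S.box i b
  box_idem : ∀ i a, S.box i (S.box i a) = S.box i a
  box_le : ∀ i a, S.box i a ≤ a
  C_top : S.C ⊤ = ⊤
  C_inf : ∀ a b, S.C (a ⊓ b) = S.C a ⊓ S.C b
  C_idem : ∀ a, S.C (S.C a) = S.C a
  C_le : ∀ a, S.C a ≤ a
  fix : ∀ a, S.C a ≤ S.E a ⊓ S.E (S.C a)
  ind : ∀ a, S.E a ⊓ S.C (a ⇨ S.E a) ≤ S.C a

/-- A standard `S4^C_I`-algebra. -/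
def Standard (S : S4CStruct I A) : Prop :=
  ∀ (d : A) (a : ℕ → A), (∀ j, a j ≤ S.E d ⊓ S.E (a (j + 1))) → a 0 ≤ S.C d

end S4CStruct

universe u

namespace S4CEmbedAux

/-! ### Generic lemmas about `S4CStruct`s satisfying the axioms -/

section generic

variable {I : Type*} [Fintype I] {β : Type*} [BooleanAlgebra β] {T : S4CStruct I β}

theorem box_mono (hT : T.IsS4C) (i : I) {x y : β} (h : x ≤ y) : T.box i x ≤ T.box i y := by
  have h2 : T.box i (x ⊓ y) = T.box i x ⊓ T.box i y := hT.box_inf i x y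
  rw [inf_eq_left.mpr h] at h2
  rw [h2]; exact inf_le_right

theorem E_mono (hT : T.IsS4C) {x y : β} (h : x ≤ y) : T.E x ≤ T.E y :=
  Finset.inf_mono_fun fun i _ => box_mono hT i h

theorem E_inf (hT : T.IsS4C) (x y : β) : T.E (x ⊓ y) = T.E x ⊓ T.E y := by
  refine le_antisymm (le_inf (E_mono hT inf_le_left) (E_mono hT inf_le_right)) ?_
  refine Finset.le_inf fun i hi => ?_
  rw [hT.box_inf i x y]
  exact inf_le_inf (Finset.inf_le hi) (Finset.inf_le hi)

theorem E_le [Nonempty I] (hT : T.IsS4C) (x : β) : T.E x ≤ x := by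
  obtain ⟨i⟩ := ‹Nonempty I›
  exact (Finset.inf_le (Finset.mem_univ i)).trans (hT.box_le i x)

theorem C_mono (hT : T.IsS4C) {x y : β} (h : x ≤ y) : T.C x ≤ T.C y := by
  have h2 : T.C (x ⊓ y) = T.C x ⊓ T.C y := hT.C_inf x y
  rw [inf_eq_left.mpr h] at h2
  rw [h2]; exact inf_le_right

/-- Key algebraic lemma: every post-fixpoint is below `C`. -/
theorem postfix_le_C (hT : T.IsS4C) {d z : β} (h : z ≤ T.E d ⊓ T.E z) : z ≤ T.C d := by
  have hzEy : z ≤ T.E (d ⊓ z) := by rw [E_inf hT]; exact h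
  have hyEy : d ⊓ z ≤ T.E (d ⊓ z) := le_trans inf_le_right hzEy
  have h1 : (d ⊓ z) ⇨ T.E (d ⊓ z) = ⊤ := himp_eq_top_iff.mpr hyEy
  have h2 : T.E (d ⊓ z) ≤ T.C (d ⊓ z) := by
    have h3 := hT.ind (d ⊓ z)
    rwa [h1, hT.C_top, inf_top_eq] at h3
  exact hzEy.trans (h2.trans (C_mono hT inf_le_left))

theorem C_le_E_inf (hT : T.IsS4C) (a : β) : T.C a ≤ T.E (a ⊓ T.C a) := by
  rw [E_inf hT]
  exact le_inf ((hT.fix a).trans inf_le_left) ((hT.fix a).trans inf_le_right)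

end generic

/-! ### Mapping finite infs and sups -/

section maps

theorem map_finset_inf' {β γ : Type*} [BooleanAlgebra β] [BooleanAlgebra γ]
    {f : β → γ} (htop : f ⊤ = ⊤) (hinf : ∀ x y, f (x ⊓ y) = f x ⊓ f y)
    {ι : Type*} (s : Finset ι) (g : ι → β) : f (s.inf g) = s.inf fun i => f (g i) := by
  classical
  induction s using Finset.induction_on with
  | empty => simpa using htop
  | insert _ _ h ih => rw [Finset.inf_insert, Finset.inf_insert, hinf, ih]

theorem map_finset_sup' {β γ : Type*} [BooleanAlgebra β] [BooleanAlgebra γ]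
    {f : β → γ} (hbot : f ⊥ = ⊥) (hsup : ∀ x y, f (x ⊔ y) = f x ⊔ f y)
    {ι : Type*} (s : Finset ι) (g : ι → β) : f (s.sup g) = s.sup fun i => f (g i) := by
  classical
  induction s using Finset.induction_on with
  | empty => simpa using hbot
  | insert _ _ h ih => rw [Finset.sup_insert, Finset.sup_insert, hsup, ih]

theorem map_E {I : Type*} [Fintype I] {β γ : Type*} [BooleanAlgebra β] [BooleanAlgebra γ]
    {T1 : S4CStruct I β} {T2 : S4CStruct I γ} {f : β → γ}
    (htop : f ⊤ = ⊤) (hinf : ∀ x y, f (x ⊓ y) = f x ⊓ f y)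
    (hbox : ∀ i a, f (T1.box i a) = T2.box i (f a)) (x : β) :
    f (T1.E x) = T2.E (f x) := by
  unfold S4CStruct.E
  rw [map_finset_inf' htop hinf]
  exact Finset.inf_congr rfl fun i _ => hbox i x

end maps

/-! ### Ultrafilters of a Boolean algebra -/

section ultra

variable {A : Type*} [BooleanAlgebra A]

/-- An ultrafilter on a Boolean algebra, as a set of elements. -/
def IsUF (p : Set A) : Prop :=
  ⊥ ∉ p ∧ (∀ a b : A, a ∈ p → a ≤ b → b ∈ p) ∧ (∀ a b : A, a ∈ p → b ∈ p → a ⊓ b ∈ p) ∧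
    ∀ a : A, a ∈ p ∨ aᶜ ∈ p

theorem IsUF.up {p : Set A} (hp : IsUF p) {a b : A} (h : a ∈ p) (hab : a ≤ b) : b ∈ p :=
  hp.2.1 a b h hab

theorem IsUF.meet {p : Set A} (hp : IsUF p) {a b : A} (h1 : a ∈ p) (h2 : b ∈ p) : a ⊓ b ∈ p :=
  hp.2.2.1 a b h1 h2

theorem IsUF.top_mem {p : Set A} (hp : IsUF p) : (⊤ : A) ∈ p :=
  (hp.2.2.2 ⊤).elim id fun h => hp.up h le_top

theorem IsUF.not_both {p : Set A} (hp : IsUF p) {a : A} (h1 : a ∈ p) (h2 : aᶜ ∈ p) : False := by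
  have h3 := hp.meet h1 h2
  rw [inf_compl_eq_bot] at h3
  exact hp.1 h3

theorem IsUF.compl_mem_iff {p : Set A} (hp : IsUF p) {a : A} : aᶜ ∈ p ↔ a ∉ p :=
  ⟨fun h ha => hp.not_both ha h, fun h => (hp.2.2.2 a).resolve_left h⟩

/-- A proper filter on a Boolean algebra. -/
def IsPF (F : Set A) : Prop :=
  ⊥ ∉ F ∧ F.Nonempty ∧ (∀ a b : A, a ∈ F → a ≤ b → b ∈ F) ∧
    ∀ a b : A, a ∈ F → b ∈ F → a ⊓ b ∈ F

theorem exists_uf_superset {F : Set A} (hF : IsPF F) : ∃ p : Set A, IsUF p ∧ F ⊆ p := by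
  classical
  have key : ∀ c ⊆ {G : Set A | IsPF G ∧ F ⊆ G}, IsChain (· ⊆ ·) c → c.Nonempty →
      ∃ ub ∈ {G : Set A | IsPF G ∧ F ⊆ G}, ∀ s ∈ c, s ⊆ ub := by
    intro c hcS hchain hcne
    refine ⟨⋃₀ c, ⟨⟨?_, ?_, ?_, ?_⟩, ?_⟩, fun s hs => Set.subset_sUnion_of_mem hs⟩
    · rintro ⟨s, hs, hbot⟩
      exact (hcS hs).1.1 hbot
    · obtain ⟨s, hs⟩ := hcne
      obtain ⟨x, hx⟩ := (hcS hs).1.2.1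
      exact ⟨x, s, hs, hx⟩
    · rintro a b ⟨s, hs, ha⟩ hab
      exact ⟨s, hs, (hcS hs).1.2.2.1 a b ha hab⟩
    · rintro a b ⟨s, hs, ha⟩ ⟨t, ht, hb⟩
      rcases hchain.total hs ht with h | h
      · exact ⟨t, ht, (hcS ht).1.2.2.2 a b (h ha) hb⟩
      · exact ⟨s, hs, (hcS hs).1.2.2.2 a b ha (h hb)⟩
    · obtain ⟨s, hs⟩ := hcne
      exact (hcS hs).2.trans (Set.subset_sUnion_of_mem hs)
  obtain ⟨m, hFm, hmax⟩ :=
    zorn_subset_nonempty {G : Set A | IsPF G ∧ F ⊆ G} key F ⟨hF, subset_rfl⟩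
  have hm : IsPF m := hmax.prop.1
  have htopm : (⊤ : A) ∈ m := by
    obtain ⟨x, hx⟩ := hm.2.1
    exact hm.2.2.1 x ⊤ hx le_top
  refine ⟨m, ⟨hm.1, hm.2.2.1, hm.2.2.2, ?_⟩, hFm⟩
  intro a
  by_cases hca : aᶜ ∈ m
  · exact Or.inr hca
  left
  have hbot' : (⊥ : A) ∉ {y : A | ∃ x ∈ m, x ⊓ a ≤ y} := by
    rintro ⟨x, hxm, hx⟩
    have hxa : x ⊓ a = ⊥ := le_bot_iff.mp hx
    have hxc : x ≤ aᶜ := by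
      have : x ⊓ a ≤ ⊥ := hxa.le
      exact le_compl_iff_disjoint_right.mpr (disjoint_iff_inf_le.mpr this)
    exact hca (hm.2.2.1 x aᶜ hxm hxc)
  have hPF' : IsPF {y : A | ∃ x ∈ m, x ⊓ a ≤ y} := by
    refine ⟨hbot', ⟨a, ⊤, htopm, by simp⟩, ?_, ?_⟩
    · rintro y z ⟨x, hxm, hx⟩ hyz
      exact ⟨x, hxm, hx.trans hyz⟩
    · rintro y z ⟨x, hxm, hx⟩ ⟨x', hx'm, hx'⟩
      refine ⟨x ⊓ x', hm.2.2.2 x x' hxm hx'm, ?_⟩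
      have : x ⊓ x' ⊓ a ≤ (x ⊓ a) ⊓ (x' ⊓ a) := by
        refine le_inf (inf_le_inf_right a inf_le_left) (inf_le_inf_right a inf_le_right)
      exact this.trans (inf_le_inf hx hx')
  have hsub : m ⊆ {y : A | ∃ x ∈ m, x ⊓ a ≤ y} := fun x hx => ⟨x, hx, inf_le_left⟩
  have heq : {y : A | ∃ x ∈ m, x ⊓ a ≤ y} ⊆ m :=
    hmax.2 ⟨hPF', hFm.trans hsub⟩ hsub
  exact heq ⟨⊤, htopm, by simp⟩

theorem exists_uf_mem {b : A} (hb : b ≠ ⊥) : ∃ p : Set A, IsUF p ∧ b ∈ p := by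
  have hPF : IsPF (Set.Ici b) := by
    refine ⟨fun h => hb (le_bot_iff.mp h), ⟨b, le_rfl⟩, ?_, ?_⟩
    · intro x y hx hxy; exact le_trans hx hxy
    · intro x y hx hy; exact le_inf hx hy
  obtain ⟨p, hp, hFp⟩ := exists_uf_superset hPF
  exact ⟨p, hp, hFp le_rfl⟩

theorem uf_finset_inf_mem {p : Set A} (hp : IsUF p) {ι : Type*} (s : Finset ι) (g : ι → A)
    (h : ∀ i ∈ s, g i ∈ p) : s.inf g ∈ p := by
  classical
  induction s using Finset.induction_on with
  | empty => simpa using hp.top_mem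
  | @insert j s hj ih =>
    rw [Finset.inf_insert]
    exact hp.meet (h j (Finset.mem_insert_self j s))
      (ih fun i hi => h i (Finset.mem_insert_of_mem hi))

/-! ### The Stone space and the Stone map -/

end ultra

/-- The type of ultrafilters on `A`. -/
def UFpt (A : Type u) [BooleanAlgebra A] : Type u := {p : Set A // IsUF p}

section stone

variable {A : Type u} [BooleanAlgebra A]

/-- The Stone map. -/
def st (a : A) : Set (UFpt A) := {p | a ∈ p.1}

theorem mem_st {a : A} {p : UFpt A} : p ∈ st a ↔ a ∈ p.1 := Iff.rfl

theorem st_top : st (⊤ : A) = ⊤ := by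
  ext p; simpa [st] using p.2.top_mem

theorem st_bot : st (⊥ : A) = ⊥ := by
  ext p; simpa [st] using p.2.1

theorem st_inf (a b : A) : st (a ⊓ b) = st a ⊓ st b := by
  ext p
  constructor
  · intro h
    exact ⟨p.2.up h inf_le_left, p.2.up h inf_le_right⟩
  · rintro ⟨h1, h2⟩
    exact p.2.meet h1 h2

theorem st_compl (a : A) : st aᶜ = (st a)ᶜ := by
  ext p
  simpa [st, Set.mem_compl_iff] using p.2.compl_mem_iff

theorem st_sup (a b : A) : st (a ⊔ b) = st a ⊔ st b := by
  have h : st ((aᶜ ⊓ bᶜ)ᶜ) = (st aᶜ ⊓ st bᶜ)ᶜ := by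
    rw [st_compl, st_inf]
  rw [compl_inf, compl_compl, compl_compl] at h
  rw [h, st_compl, st_compl, compl_inf, compl_compl, compl_compl]

theorem st_mono {a b : A} (h : a ≤ b) : st a ≤ st b := by
  intro p hp
  exact p.2.up hp h

theorem st_le_iff {a b : A} : st a ≤ st b ↔ a ≤ b := by
  refine ⟨fun h => ?_, st_mono⟩
  by_contra hab
  have hne : a ⊓ bᶜ ≠ ⊥ := by
    intro h0
    apply hab
    have : a \ b = ⊥ := by rwa [sdiff_eq]
    exact sdiff_eq_bot_iff.mp this
  obtain ⟨q, hq, hmem⟩ := exists_uf_mem hne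
  have ha : a ∈ q := hq.up hmem inf_le_left
  have hbc : bᶜ ∈ q := hq.up hmem inf_le_right
  have hb : b ∈ q := h (show (⟨q, hq⟩ : UFpt A) ∈ st a from ha)
  exact hq.not_both hb hbc

theorem st_inj : Function.Injective (st (A := A)) := by
  intro a b h
  exact le_antisymm (st_le_iff.mp h.le) (st_le_iff.mp h.ge)

/-- Compactness: if the clopen set of `c` is covered by a sup-directed family, then
`c` is below one member of the family. -/
theorem cover_lemma {c : A} {D : Set A}
    (hdir : ∀ d₁ ∈ D, ∀ d₂ ∈ D, ∃ d₃ ∈ D, d₁ ⊔ d₂ ≤ d₃) (hne : D.Nonempty)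
    (hcov : ∀ p : UFpt A, c ∈ p.1 → ∃ d ∈ D, d ∈ p.1) : ∃ d ∈ D, c ≤ d := by
  by_contra h
  push_neg at h
  have hFPF : IsPF {x : A | ∃ d ∈ D, c ⊓ dᶜ ≤ x} := by
    refine ⟨?_, ?_, ?_, ?_⟩
    · rintro ⟨d, hd, hle⟩
      refine h d hd ?_
      have h0 : c ⊓ dᶜ = ⊥ := le_bot_iff.mp hle
      have : c \ d = ⊥ := by rwa [sdiff_eq]
      exact sdiff_eq_bot_iff.mp this
    · obtain ⟨d, hd⟩ := hne
      exact ⟨c ⊓ dᶜ, d, hd, le_rfl⟩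
    · rintro x y ⟨d, hd, hle⟩ hxy
      exact ⟨d, hd, hle.trans hxy⟩
    · rintro x y ⟨d1, h1, hle1⟩ ⟨d2, h2, hle2⟩
      obtain ⟨d3, h3, hle3⟩ := hdir d1 h1 d2 h2
      refine ⟨d3, h3, ?_⟩
      have e1 : c ⊓ d3ᶜ ≤ c ⊓ d1ᶜ :=
        inf_le_inf_left c (compl_le_compl (le_sup_left.trans hle3))
      have e2 : c ⊓ d3ᶜ ≤ c ⊓ d2ᶜ :=
        inf_le_inf_left c (compl_le_compl (le_sup_right.trans hle3))
      exact le_inf (e1.trans hle1) (e2.trans hle2)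
  obtain ⟨p, hpUF, hFp⟩ := exists_uf_superset hFPF
  have hcp : c ∈ p := by
    obtain ⟨d, hd⟩ := hne
    exact hFp ⟨d, hd, inf_le_left⟩
  obtain ⟨d, hd, hdp⟩ := hcov ⟨p, hpUF⟩ hcp
  have hdc : dᶜ ∈ p := hFp ⟨d, hd, inf_le_right⟩
  exact hpUF.not_both hdp hdc

end stone

/-! ### The completion construction -/

section construction

variable {I : Type*} [Fintype I] {A : Type u} [BooleanAlgebra A]

/-- The lower extension of the box operators to the powerset of the Stone space. -/
def bx (S : S4CStruct I A) (i : I) (U : Set (UFpt A)) : Set (UFpt A) :=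
  ⋃ (c : A) (_ : st c ≤ U), st (S.box i c)

theorem mem_bx {S : S4CStruct I A} {i : I} {U : Set (UFpt A)} {p : UFpt A} :
    p ∈ bx S i U ↔ ∃ c : A, st c ≤ U ∧ S.box i c ∈ p.1 := by
  simp [bx, mem_st]

theorem st_box_le_bx {S : S4CStruct I A} {i : I} {U : Set (UFpt A)} {c : A}
    (h : st c ≤ U) : st (S.box i c) ≤ bx S i U := by
  intro p hp
  exact mem_bx.mpr ⟨c, h, hp⟩

theorem bx_mono (S : S4CStruct I A) (i : I) {U V : Set (UFpt A)} (h : U ≤ V) :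
    bx S i U ≤ bx S i V := by
  intro p hp
  obtain ⟨c, hc, hbox⟩ := mem_bx.mp hp
  exact mem_bx.mpr ⟨c, hc.trans h, hbox⟩

theorem bx_le (S : S4CStruct I A) (hS : S.IsS4C) (i : I) (U : Set (UFpt A)) : bx S i U ≤ U := by
  intro p hp
  obtain ⟨c, hc, hbox⟩ := mem_bx.mp hp
  exact hc (st_mono (hS.box_le i c) hbox)

theorem bx_st (S : S4CStruct I A) (hS : S.IsS4C) (i : I) (a : A) :
    bx S i (st a) = st (S.box i a) := by
  apply le_antisymm
  · intro p hp
    obtain ⟨c, hc, hbox⟩ := mem_bx.mp hp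
    exact st_mono (box_mono hS i (st_le_iff.mp hc)) hbox
  · exact st_box_le_bx le_rfl

theorem bx_top (S : S4CStruct I A) (hS : S.IsS4C) (i : I) : bx S i ⊤ = ⊤ := by
  apply le_antisymm le_top
  have h := st_box_le_bx (S := S) (i := i) (U := ⊤) (c := ⊤) le_top
  rw [hS.box_top, st_top] at h
  exact h

theorem bx_inf (S : S4CStruct I A) (hS : S.IsS4C) (i : I) (U V : Set (UFpt A)) :
    bx S i (U ⊓ V) = bx S i U ⊓ bx S i V := by
  apply le_antisymm
  · exact le_inf (bx_mono S i inf_le_left) (bx_mono S i inf_le_right)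
  · rintro p ⟨h1, h2⟩
    obtain ⟨c, hc, hboxc⟩ := mem_bx.mp h1
    obtain ⟨d, hd, hboxd⟩ := mem_bx.mp h2
    refine mem_bx.mpr ⟨c ⊓ d, ?_, ?_⟩
    · rw [st_inf]
      exact inf_le_inf hc hd
    · rw [hS.box_inf]
      exact p.2.meet hboxc hboxd

theorem bx_idem (S : S4CStruct I A) (hS : S.IsS4C) (i : I) (U : Set (UFpt A)) :
    bx S i (bx S i U) = bx S i U := by
  apply le_antisymm (bx_le S hS i _)
  intro p hp
  obtain ⟨c, hc, hbox⟩ := mem_bx.mp hp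
  refine mem_bx.mpr ⟨S.box i c, st_box_le_bx hc, ?_⟩
  rw [hS.box_idem]
  exact hbox

/-- The `E` operator of the completion. -/
def Eo (S : S4CStruct I A) (U : Set (UFpt A)) : Set (UFpt A) :=
  Finset.univ.inf fun i => bx S i U

theorem mem_Eo {S : S4CStruct I A} {U : Set (UFpt A)} {p : UFpt A} :
    p ∈ Eo S U ↔ ∀ i : I, p ∈ bx S i U := by
  simp [Eo, Finset.inf_eq_iInf]

theorem Eo_mono (S : S4CStruct I A) {U V : Set (UFpt A)} (h : U ≤ V) : Eo S U ≤ Eo S V := by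
  intro p hp
  exact mem_Eo.mpr fun i => bx_mono S i h (mem_Eo.mp hp i)

theorem Eo_inf (S : S4CStruct I A) (hS : S.IsS4C) (U V : Set (UFpt A)) :
    Eo S (U ⊓ V) = Eo S U ⊓ Eo S V := by
  apply le_antisymm
  · exact le_inf (Eo_mono S inf_le_left) (Eo_mono S inf_le_right)
  · rintro p ⟨h1, h2⟩
    refine mem_Eo.mpr fun i => ?_
    rw [bx_inf S hS]
    exact ⟨mem_Eo.mp h1 i, mem_Eo.mp h2 i⟩

theorem Eo_le [Nonempty I] (S : S4CStruct I A) (hS : S.IsS4C) (U : Set (UFpt A)) :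
    Eo S U ≤ U := by
  obtain ⟨i⟩ := ‹Nonempty I›
  intro p hp
  exact bx_le S hS i U (mem_Eo.mp hp i)

theorem Eo_st (S : S4CStruct I A) (hS : S.IsS4C) (a : A) : Eo S (st a) = st (S.E a) := by
  unfold Eo S4CStruct.E
  rw [map_finset_inf' st_top st_inf]
  exact Finset.inf_congr rfl fun i _ => bx_st S hS i a

theorem Eo_top (S : S4CStruct I A) (hS : S.IsS4C) : Eo S ⊤ = ⊤ := by
  apply le_antisymm le_top
  intro p _
  refine mem_Eo.mpr fun i => ?_
  rw [bx_top S hS]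
  trivial

/-- The common-knowledge operator of the completion: the greatest post-fixpoint. -/
def Co (S : S4CStruct I A) (U : Set (UFpt A)) : Set (UFpt A) :=
  ⋃ (z : Set (UFpt A)) (_ : z ≤ Eo S (U ⊓ z)), z

theorem le_Co {S : S4CStruct I A} {U z : Set (UFpt A)} (h : z ≤ Eo S (U ⊓ z)) :
    z ≤ Co S U := by
  unfold Co
  exact Set.subset_iUnion₂ (κ := fun w => w ≤ Eo S (U ⊓ w))
    (s := fun w _ => w) z h

theorem Co_postfix (S : S4CStruct I A) (U : Set (UFpt A)) :
    Co S U ≤ Eo S (U ⊓ Co S U) := by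
  intro p hp
  simp only [Co, Set.mem_iUnion] at hp
  obtain ⟨z, hz, hpz⟩ := hp
  exact Eo_mono S (inf_le_inf_left U (le_Co hz)) (hz hpz)

theorem Co_mono (S : S4CStruct I A) {U V : Set (UFpt A)} (h : U ≤ V) : Co S U ≤ Co S V := by
  refine Set.iUnion₂_subset fun z hz => le_Co ?_
  exact hz.trans (Eo_mono S (inf_le_inf_right z h))

theorem Co_le [Nonempty I] (S : S4CStruct I A) (hS : S.IsS4C) (U : Set (UFpt A)) :
    Co S U ≤ U :=
  (Co_postfix S U).trans ((Eo_le S hS _).trans inf_le_left)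

theorem Co_top [Nonempty I] (S : S4CStruct I A) (hS : S.IsS4C) : Co S ⊤ = ⊤ := by
  apply le_antisymm le_top
  refine le_Co ?_
  rw [top_inf_eq, Eo_top S hS]

theorem Co_inf (S : S4CStruct I A) (hS : S.IsS4C) (U V : Set (UFpt A)) :
    Co S (U ⊓ V) = Co S U ⊓ Co S V := by
  apply le_antisymm
  · exact le_inf (Co_mono S inf_le_left) (Co_mono S inf_le_right)
  · refine le_Co ?_
    have h1 : Co S U ⊓ Co S V ≤ Eo S (U ⊓ Co S U) ⊓ Eo S (V ⊓ Co S V) :=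
      inf_le_inf (Co_postfix S U) (Co_postfix S V)
    have h2 : Eo S (U ⊓ Co S U) ⊓ Eo S (V ⊓ Co S V) = Eo S ((U ⊓ V) ⊓ (Co S U ⊓ Co S V)) := by
      rw [← Eo_inf S hS, inf_inf_inf_comm]
    exact h1.trans h2.le

theorem Co_idem [Nonempty I] (S : S4CStruct I A) (hS : S.IsS4C) (U : Set (UFpt A)) :
    Co S (Co S U) = Co S U := by
  apply le_antisymm (Co_le S hS _)
  refine le_Co ?_
  refine (Co_postfix S U).trans (Eo_mono S ?_)
  exact le_inf inf_le_right inf_le_right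

theorem Co_fix (S : S4CStruct I A) (hS : S.IsS4C) (U : Set (UFpt A)) :
    Co S U ≤ Eo S U ⊓ Eo S (Co S U) := by
  have h := Co_postfix S U
  rwa [Eo_inf S hS] at h

theorem Co_ind (S : S4CStruct I A) (hS : S.IsS4C) (U : Set (UFpt A)) :
    Eo S U ⊓ Co S (U ⇨ Eo S U) ≤ Co S U := by
  set P := U ⇨ Eo S U with hP
  refine le_Co ?_
  have h1 : Eo S U ⊓ Co S P ≤ Eo S U ⊓ Eo S (P ⊓ Co S P) :=
    inf_le_inf_left _ (Co_postfix S P)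
  have h2 : Eo S U ⊓ Eo S (P ⊓ Co S P) = Eo S (U ⊓ (P ⊓ Co S P)) :=
    (Eo_inf S hS U (P ⊓ Co S P)).symm
  have h3 : U ⊓ (P ⊓ Co S P) = U ⊓ (Eo S U ⊓ Co S P) := by
    rw [← inf_assoc, ← inf_assoc, hP, inf_himp]
  refine h1.trans ?_
  rw [h2, h3]

/-! ### Preservation of `C`, using standardness -/

theorem key_lemma [Nonempty I] (S : S4CStruct I A) (hS : S.IsS4C) (hstd : S.Standard)
    (a : A) (z : Set (UFpt A)) (hz : z ≤ Eo S (st a ⊓ z)) : z ≤ st (S.C a) := by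
  classical
  -- the set of "good" approximations
  set G : Set A := {d | d ≤ a ∧ st d ≤ z} with hG
  have stepA : ∀ p ∈ z, ∃ c ∈ G, S.E c ∈ p.1 := by
    intro p hp
    have h1 : ∀ i : I, ∃ c : A, st c ≤ st a ⊓ z ∧ S.box i c ∈ p.1 := by
      intro i
      exact mem_bx.mp (mem_Eo.mp (hz hp) i)
    choose c hc1 hc2 using h1
    refine ⟨Finset.univ.sup c, ⟨?_, ?_⟩, ?_⟩
    · exact Finset.sup_le fun i _ => st_le_iff.mp ((hc1 i).trans inf_le_left)
    · have hst : st (Finset.univ.sup c) = Finset.univ.sup fun i => st (c i) :=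
        map_finset_sup' st_bot st_sup Finset.univ c
      rw [hst]
      exact Finset.sup_le fun i _ => (hc1 i).trans inf_le_right
    · refine uf_finset_inf_mem p.2 Finset.univ (fun i => S.box i (Finset.univ.sup c)) ?_
      intro i _
      exact p.2.up (hc2 i) (box_mono hS i (Finset.le_sup (Finset.mem_univ i)))
  have hGsup : ∀ c ∈ G, ∀ d ∈ G, c ⊔ d ∈ G := by
    intro c hc d hd
    refine ⟨sup_le hc.1 hd.1, ?_⟩
    rw [st_sup]
    exact sup_le hc.2 hd.2
  have stepB : ∀ c ∈ G, ∃ c' ∈ G, c ≤ S.E c' := by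
    intro c hcG
    have hcov : ∀ p : UFpt A, c ∈ p.1 → ∃ d ∈ S.E '' G, d ∈ p.1 := by
      intro p hcp
      have hpz : p ∈ z := hcG.2 hcp
      obtain ⟨c', hc'G, hc'E⟩ := stepA p hpz
      exact ⟨S.E c', ⟨c', hc'G, rfl⟩, hc'E⟩
    have hdir : ∀ d₁ ∈ S.E '' G, ∀ d₂ ∈ S.E '' G, ∃ d₃ ∈ S.E '' G, d₁ ⊔ d₂ ≤ d₃ := by
      rintro _ ⟨e₁, he₁, rfl⟩ _ ⟨e₂, he₂, rfl⟩
      exact ⟨S.E (e₁ ⊔ e₂), ⟨_, hGsup _ he₁ _ he₂, rfl⟩,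
        sup_le (E_mono hS le_sup_left) (E_mono hS le_sup_right)⟩
    have hne : (S.E '' G).Nonempty := ⟨S.E c, c, hcG, rfl⟩
    obtain ⟨d, hd, hcd⟩ := cover_lemma hdir hne hcov
    obtain ⟨c', hc'G, rfl⟩ := hd
    exact ⟨c', hc'G, hcd⟩
  intro p hp
  obtain ⟨c0, hc0G, hc0E⟩ := stepA p hp
  choose nxt hnxtG hnxt using stepB
  let seq : ℕ → {c : A // c ∈ G} := fun n =>
    Nat.rec ⟨c0, hc0G⟩ (fun _ q => ⟨nxt q.1 q.2, hnxtG q.1 q.2⟩) n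
  have hseq : ∀ n, (seq n).1 ≤ S.E ((seq (n + 1)).1) := fun n => hnxt (seq n).1 (seq n).2
  have hchain : ∀ j, (seq j).1 ≤ S.E a ⊓ S.E ((seq (j + 1)).1) := by
    intro j
    refine le_inf ?_ (hseq j)
    exact (hseq j).trans (E_mono hS (seq (j + 1)).2.1)
  have hc0C : c0 ≤ S.C a := hstd a (fun n => (seq n).1) hchain
  have : S.C a ∈ p.1 := p.2.up hc0E ((E_le hS c0).trans hc0C)
  exact this

theorem Co_st [Nonempty I] (S : S4CStruct I A) (hS : S.IsS4C) (hstd : S.Standard) (a : A) :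
    Co S (st a) = st (S.C a) := by
  apply le_antisymm
  · exact Set.iUnion₂_subset fun z hz => key_lemma S hS hstd a z hz
  · refine le_Co ?_
    have h1 : st (S.C a) ≤ st (S.E (a ⊓ S.C a)) := st_mono (C_le_E_inf hS a)
    rw [← Eo_st S hS, st_inf] at h1
    exact h1

end construction

end S4CEmbedAux

open S4CEmbedAux

theorem embeddable_iff_standard {I : Type*} {A : Type u} [Fintype I] [Nonempty I]
    [BooleanAlgebra A] (S : S4CStruct I A) (hS : S.IsS4C) :
    (∃ (B : Type u) (_ : BooleanAlgebra B) (T : S4CStruct I B),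
      T.IsS4C ∧ (∀ s : Set B, ∃ b : B, IsLUB s b) ∧
      ∃ f : A → B, Function.Injective f ∧
        (∀ a b : A, f (a ⊓ b) = f a ⊓ f b) ∧
        (∀ a b : A, f (a ⊔ b) = f a ⊔ f b) ∧
        (∀ a : A, f aᶜ = (f a)ᶜ) ∧ f ⊥ = ⊥ ∧ f ⊤ = ⊤ ∧
        (∀ (i : I) (a : A), f (S.box i a) = T.box i (f a)) ∧
        (∀ a : A, f (S.C a) = T.C (f a))) ↔ S.Standard := by
  constructor
  · -- embeddable → standard
    rintro ⟨B, _, T, hT, hcomplete, f, hinj, hinf, hsup, hcompl, hbot, htop, hbox, hC⟩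
    intro d a ha
    obtain ⟨b, hb⟩ := hcomplete (Set.range fun j => f (a j))
    have hmono : ∀ {x y : A}, x ≤ y → f x ≤ f y := by
      intro x y h
      have h2 : f (x ⊓ y) = f x ⊓ f y := hinf x y
      rw [inf_eq_left.mpr h] at h2
      exact h2.le.trans inf_le_right
    have hrefl : ∀ {x y : A}, f x ≤ f y → x ≤ y := by
      intro x y h
      have h2 : f (x ⊓ y) = f x := by rw [hinf]; exact inf_eq_left.mpr h
      exact inf_eq_left.mp (hinj h2)
    have hmapE : ∀ x, f (S.E x) = T.E (f x) := map_E htop hinf hbox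
    have hub : T.E (f d) ⊓ T.E b ∈ upperBounds (Set.range fun j => f (a j)) := by
      rintro x ⟨j, rfl⟩
      have h1 : f (a j) ≤ f (S.E d ⊓ S.E (a (j + 1))) := hmono (ha j)
      rw [hinf, hmapE, hmapE] at h1
      refine h1.trans (inf_le_inf le_rfl (E_mono hT ?_))
      exact hb.1 ⟨j + 1, rfl⟩
    have hble : b ≤ T.E (f d) ⊓ T.E b := hb.2 hub
    have hbC : b ≤ T.C (f d) := postfix_le_C hT hble
    have h0 : f (a 0) ≤ f (S.C d) := by
      rw [hC]
      exact (hb.1 ⟨0, rfl⟩).trans hbC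
    exact hrefl h0
  · -- standard → embeddable
    intro hstd
    refine ⟨Set (UFpt A), inferInstance, ⟨bx S, Co S⟩, ?_, ?_, st, st_inj, st_inf, st_sup,
      st_compl, st_bot, st_top, ?_, ?_⟩
    · -- IsS4C
      refine ⟨fun i => bx_top S hS i, fun i U V => bx_inf S hS i U V,
        fun i U => bx_idem S hS i U, fun i U => bx_le S hS i U,
        Co_top S hS, fun U V => Co_inf S hS U V, fun U => Co_idem S hS U,
        fun U => Co_le S hS U, ?_, ?_⟩
      · intro U
        exact Co_fix S hS U
      · intro U
        exact Co_ind S hS U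
    · -- completeness
      intro s
      exact ⟨sSup s, isLUB_sSup s⟩
    · -- box preservation
      intro i a
      exact (bx_st S hS i a).symm
    · -- C preservation
      intro a
      exact (Co_st S hS hstd a).symm
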